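/- The Lebesgue measure of a prolate hyperspheroid in R^n with focal points x_start and x_goal, defined as the set of points x with ||x - x_start|| + ||x_goal - x|| < c, where c > c_min := ||x_goal - x_start||, equals c·(c² - c_min²)^((n-1)/2)·ζ_n / 2^n, where ζ_n = π^(n/2)/Γ(n/2 + 1) is the measure of the unit n-ball. -/

import Mathlib

open MeasureTheory Real

set_option maxHeartbeats 1000000 in
/-- Core algebraic equivalence for the ellipse condition. -/
private lemma ellipse_core (c f q N s t : ℝ) (hf : 0 ≤ f) (h2f : 2*f < c)
    (hq : q^2 ≤ N) (hs : 0 ≤ s) (ht : 0 ≤ t)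
    (hs2 : s^2 = N + 2*f*q + f^2) (ht2 : t^2 = N - 2*f*q + f^2) :
    s + t < c ↔ q^2/(c/2)^2 + (N - q^2)/((c^2-4*f^2)/4) < 1 := by
  have hc0 : 0 < c := lt_of_le_of_lt (by positivity) h2f
  have hb : 0 < c^2 - 4*f^2 := by nlinarith
  have hN : 0 ≤ N := le_trans (sq_nonneg q) hq
  have hst : 0 ≤ s * t := mul_nonneg hs ht
  have hstsq : (s*t)^2 = (N + f^2)^2 - 4*f^2*q^2 := by
    rw [mul_pow, hs2, ht2]; ring
  have he : q^2/(c/2)^2 + (N - q^2)/((c^2-4*f^2)/4)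
      = (4*q^2*(c^2-4*f^2) + 4*(N-q^2)*c^2) / (c^2*(c^2-4*f^2)) := by
    field_simp
    ring
  rw [he, div_lt_one (by positivity)]
  have e1 : (2*(s*t))^2 = 4*(N+f^2)^2 - 16*f^2*q^2 := by
    rw [mul_pow, hstsq]; ring
  constructor
  · intro h
    have h2 : (s+t)^2 < c^2 := by nlinarith
    have hR : 2*(s*t) < c^2 - 2*N - 2*f^2 := by nlinarith
    have hR0 : 0 < c^2 - 2*N - 2*f^2 := lt_of_le_of_lt (by positivity) hR
    have hsq : (2*(s*t))^2 < (c^2 - 2*N - 2*f^2)^2 :=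
      mul_self_lt_mul_self (by positivity) hR |>.trans_eq (by ring) |>.trans_eq' (by ring)
    rw [e1] at hsq
    nlinarith [hsq]
  · intro h
    have hN4 : 4*N < c^2 := by nlinarith [mul_nonneg (sub_nonneg.2 hq) (sq_nonneg f)]
    have hR0 : 0 < c^2 - 2*N - 2*f^2 := by nlinarith
    have hsq : (2*(s*t))^2 < (c^2 - 2*N - 2*f^2)^2 := by rw [e1]; nlinarith
    have hRst : 2*(s*t) < c^2 - 2*N - 2*f^2 := by nlinarith [hsq, hst, hR0]
    have h2 : (s+t)^2 < c^2 := by nlinarith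
    nlinarith [h2]

set_option maxHeartbeats 1000000 in
/-- The Lebesgue measure of the prolate hyperspheroid with focal points `xs`, `xg`
and transverse diameter `c > c_min = dist xg xs` is
`c (c² - c_min²)^((n-1)/2) ζ_n / 2^n` with `ζ_n = π^(n/2)/Γ(n/2+1)`. -/
theorem phs_volume (n : ℕ) (hn : 1 ≤ n) (xs xg : EuclideanSpace ℝ (Fin n)) (c : ℝ)
    (hc : dist xg xs < c) :
    (volume {x : EuclideanSpace ℝ (Fin n) | dist x xs + dist xg x < c}).toReal =
      c * (c ^ 2 - (dist xg xs) ^ 2) ^ (((n : ℝ) - 1) / 2) *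
        (Real.pi ^ ((n : ℝ) / 2) / Real.Gamma ((n : ℝ) / 2 + 1)) / 2 ^ n := by
  obtain ⟨m, rfl⟩ : ∃ m, n = m + 1 := ⟨n - 1, (Nat.succ_pred_eq_of_pos hn).symm⟩
  set d : EuclideanSpace ℝ (Fin (m+1)) := (2:ℝ)⁻¹ • (xg - xs) with hd
  set f : ℝ := ‖d‖ with hfdef
  have hxgxs : xg - xs = (2:ℝ) • d := by rw [hd, smul_smul]; norm_num
  have hcmin : dist xg xs = 2 * f := by
    rw [dist_eq_norm, hxgxs, norm_smul]; norm_num; rfl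
  have hf : 0 ≤ f := norm_nonneg d
  have h2f : 2*f < c := by rw [hcmin] at hc; linarith
  have hc0 : 0 < c := lt_of_le_of_lt (by positivity) h2f
  have hb2 : 0 < c^2 - 4*f^2 := by nlinarith
  -- Step 1: translation
  set E : Set (EuclideanSpace ℝ (Fin (m+1))) := {x | dist x xs + dist xg x < c} with hE
  set E₀ : Set (EuclideanSpace ℝ (Fin (m+1))) := {y | ‖y + d‖ + ‖y - d‖ < c} with hE0
  have hEopen : IsOpen E := by
    apply isOpen_lt _ continuous_const
    exact ((continuous_id.dist continuous_const).add (continuous_const.dist continuous_id))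
  have step1 : volume E = volume E₀ := by
    have hmp := measurePreserving_add_right (volume : Measure (EuclideanSpace ℝ (Fin (m+1)))) (xs + d)
    have hpre : (· + (xs + d)) ⁻¹' E = E₀ := by
      ext y
      simp only [Set.mem_preimage, hE, hE0, Set.mem_setOf_eq]
      have e1 : dist (y + (xs + d)) xs = ‖y + d‖ := by
        rw [dist_eq_norm]; congr 1; abel
      have e2 : dist xg (y + (xs + d)) = ‖y - d‖ := by
        rw [dist_eq_norm, ← norm_sub_rev]
        congr 1
        have : xg = xs + (2:ℝ) • d := by rw [← hxgxs]; abel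
        rw [this]; module
      rw [e1, e2]
    rw [← hpre, hmp.measure_preimage hEopen.measurableSet.nullMeasurableSet]
  -- Step 2: rotation
  set v : EuclideanSpace ℝ (Fin (m+1)) := f • EuclideanSpace.single (0 : Fin (m+1)) (1:ℝ) with hv
  have hvnorm : ‖v‖ = f := by
    rw [hv, norm_smul, EuclideanSpace.norm_single]
    simp [hfdef, abs_of_nonneg hf]
  set R := Submodule.reflection (ℝ ∙ (v - d))ᗮ with hR
  have hRv : R v = d := Submodule.reflection_sub (by rw [hvnorm])
  set E₁ : Set (EuclideanSpace ℝ (Fin (m+1))) := {y | ‖y + v‖ + ‖y - v‖ < c} with hE1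
  have hE0open : IsOpen E₀ := by
    apply isOpen_lt _ continuous_const
    fun_prop
  have step2 : volume E₀ = volume E₁ := by
    have hmp := R.measurePreserving
    have hpre : (R : EuclideanSpace ℝ (Fin (m+1)) → EuclideanSpace ℝ (Fin (m+1))) ⁻¹' E₀ = E₁ := by
      ext y
      simp only [Set.mem_preimage, hE0, hE1, Set.mem_setOf_eq]
      have e1 : ‖(R : _ → _) y + d‖ = ‖y + v‖ := by
        rw [← hRv, ← map_add]; exact R.norm_map _
      have e2 : ‖(R : _ → _) y - d‖ = ‖y - v‖ := by
        rw [← hRv, ← map_sub]; exact R.norm_map _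
      rw [e1, e2]
    rw [← hpre, hmp.measure_preimage hE0open.measurableSet.nullMeasurableSet]
  -- Step 3: linear image of the unit ball
  set a : ℝ := c/2 with ha
  set b : ℝ := Real.sqrt (c^2 - 4*f^2) / 2 with hbdef
  have hbpos : 0 < b := by rw [hbdef]; positivity
  have hbsq : b^2 = (c^2 - 4*f^2)/4 := by
    rw [hbdef, div_pow, Real.sq_sqrt hb2.le]; norm_num
  set w : Fin (m+1) → ℝ := fun i => if i = 0 then a else b with hwdef
  have hwpos : ∀ i, 0 < w i := by
    intro i; rw [hwdef]; dsimp only; split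
    · rw [ha]; positivity
    · exact hbpos
  set L := Matrix.toEuclideanLin (Matrix.diagonal w) with hL
  set Linv := Matrix.toEuclideanLin (Matrix.diagonal fun i => (w i)⁻¹) with hLinv
  have hLapp : ∀ (z : EuclideanSpace ℝ (Fin (m+1))) i, L z i = w i * z i := by
    intro z i
    rw [hL]
    simp [Matrix.toEuclideanLin_apply, Matrix.mulVec_diagonal]
  have hLinvapp : ∀ (z : EuclideanSpace ℝ (Fin (m+1))) i, Linv z i = (w i)⁻¹ * z i := by
    intro z i
    rw [hLinv]
    simp [Matrix.toEuclideanLin_apply, Matrix.mulVec_diagonal]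
  have hLLinv : ∀ z, L (Linv z) = z := by
    intro z
    ext i
    rw [hLapp, hLinvapp, ← mul_assoc, mul_inv_cancel₀ (hwpos i).ne', one_mul]
  have hLinvL : ∀ z, Linv (L z) = z := by
    intro z
    ext i
    rw [hLinvapp, hLapp, ← mul_assoc, inv_mul_cancel₀ (hwpos i).ne', one_mul]
  have hnormsq : ∀ z : EuclideanSpace ℝ (Fin (m+1)), ‖z‖^2 = ∑ i, (z i)^2 := by
    intro z
    rw [EuclideanSpace.norm_eq, Real.sq_sqrt (by positivity)]
    simp [sq_abs]
  -- membership characterization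
  have key : ∀ x : EuclideanSpace ℝ (Fin (m+1)), x ∈ E₁ ↔ ‖Linv x‖ < 1 := by
    intro x
    set q : ℝ := x 0 with hq
    set P : ℝ := ∑ i ∈ Finset.univ.erase 0, (x i)^2 with hP
    have hPnn : 0 ≤ P := Finset.sum_nonneg fun i _ => sq_nonneg _
    have hNP : ∑ i, (x i)^2 = q^2 + P := by
      rw [hP, hq, Finset.add_sum_erase Finset.univ (fun i => (x i)^2) (Finset.mem_univ 0)]
    have hinner : inner ℝ x v = f * q := by
      rw [hv, real_inner_smul_right, EuclideanSpace.inner_single_right]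
      simp [hq]
    have hs2 : ‖x + v‖^2 = (q^2 + P) + 2*f*q + f^2 := by
      rw [norm_add_sq_real, hnormsq x, hNP, hinner, hvnorm]; ring
    have ht2 : ‖x - v‖^2 = (q^2 + P) - 2*f*q + f^2 := by
      rw [norm_sub_sq_real, hnormsq x, hNP, hinner, hvnorm]; ring
    have core := ellipse_core c f q (q^2 + P) ‖x + v‖ ‖x - v‖ hf h2f
      (by linarith) (norm_nonneg _) (norm_nonneg _) hs2 ht2
    have hLinvnorm : ‖Linv x‖^2 = q^2/(c/2)^2 + P/((c^2-4*f^2)/4) := by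
      rw [hnormsq]
      have hsplit : ∑ i, (Linv x i)^2
          = (Linv x 0)^2 + ∑ i ∈ Finset.univ.erase 0, (Linv x i)^2 :=
        (Finset.add_sum_erase Finset.univ (fun i => (Linv x i)^2) (Finset.mem_univ 0)).symm
      rw [hsplit]
      have e0 : (Linv x 0)^2 = q^2/(c/2)^2 := by
        rw [hLinvapp, hq]
        have : w 0 = a := by simp [hwdef]
        rw [this, mul_pow, inv_pow, inv_mul_eq_div, ha]
      have e1 : ∑ i ∈ Finset.univ.erase 0, (Linv x i)^2 = P/((c^2-4*f^2)/4) := by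
        rw [← hbsq, hP, Finset.sum_div]
        apply Finset.sum_congr rfl
        intro i hi
        have hi0 : i ≠ 0 := Finset.ne_of_mem_erase hi
        rw [hLinvapp]
        have : w i = b := by rw [hwdef]; simp [hi0]
        rw [this, mul_pow, inv_pow, inv_mul_eq_div]
      rw [e0, e1]
    have h01 : ∀ r : ℝ, 0 ≤ r → (r < 1 ↔ r^2 < 1) := by
      intro r hr
      constructor <;> intro h <;> nlinarith
    rw [hE1, Set.mem_setOf_eq, core, h01 _ (norm_nonneg _), hLinvnorm]
    have : q^2 + P - q^2 = P := by ring
    rw [this]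
  have himg : E₁ = L '' Metric.ball 0 1 := by
    ext x
    constructor
    · intro hx
      exact ⟨Linv x, by rw [mem_ball_zero_iff]; exact (key x).mp hx, hLLinv x⟩
    · rintro ⟨y, hy, rfl⟩
      apply (key _).mpr
      rw [hLinvL]
      exact mem_ball_zero_iff.mp hy
  -- Step 4: compute the volume
  have hdet : LinearMap.det L = a * b^m := by
    rw [hL, Matrix.toEuclideanLin_eq_toLin, LinearMap.det_toLin, Matrix.det_diagonal]
    rw [← Finset.mul_prod_erase Finset.univ w (Finset.mem_univ 0)]
    have hw0 : w 0 = a := by simp [hwdef]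
    have hprod : ∏ i ∈ Finset.univ.erase 0, w i = b^m := by
      have hcongr : ∀ i ∈ Finset.univ.erase (0 : Fin (m+1)), w i = b := by
        intro i hi; simp [hwdef, Finset.ne_of_mem_erase hi]
      rw [Finset.prod_congr rfl hcongr, Finset.prod_const,
        Finset.card_erase_of_mem (Finset.mem_univ 0), Finset.card_univ, Fintype.card_fin]
      norm_num
    rw [hw0, hprod]
  have hvol : volume E₁ = ENNReal.ofReal (a * b^m) *
      (ENNReal.ofReal (Real.sqrt π ^ (m+1) / Real.Gamma ((m+1 : ℕ) / 2 + 1))) := by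
    rw [himg, Measure.addHaar_image_linearMap, hdet,
      abs_of_pos (by positivity), EuclideanSpace.volume_ball, Fintype.card_fin]
    simp
  have hGammapos : 0 < Real.Gamma (((m:ℝ)+1) / 2 + 1) := Real.Gamma_pos_of_pos (by positivity)
  rw [step1, step2, hvol]
  rw [← ENNReal.ofReal_mul (by positivity), ENNReal.toReal_ofReal]
  · -- real arithmetic
    have hcast : ((m+1 : ℕ) : ℝ) = (m:ℝ) + 1 := by push_cast; ring
    rw [hcast, hcmin]
    have hbm : b^m = (c^2 - (2*f)^2) ^ ((m:ℝ)/2) / 2^m := by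
      rw [hbdef, div_pow]
      congr 1
      rw [Real.sqrt_eq_rpow, ← Real.rpow_natCast (_ ^ (1/2:ℝ)) m,
        ← Real.rpow_mul (by nlinarith)]
      norm_num
      rw [mul_comm]
      ring_nf
    have hpim : Real.sqrt π ^ (m+1) = π ^ (((m:ℝ)+1)/2) := by
      rw [Real.sqrt_eq_rpow, ← Real.rpow_natCast (_ ^ (1/2:ℝ)) (m+1),
        ← Real.rpow_mul pi_pos.le]
      push_cast
      ring_nf
    have hexp : (((m:ℝ)+1) - 1)/2 = (m:ℝ)/2 := by ring
    rw [hbm, hpim, hexp]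
    have h2f2 : c^2 - (2*f)^2 = c^2 - 4*f^2 := by ring
    rw [ha]
    field_simp
    ring_nf
  · positivity
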